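/- Let W be the generalized Witt algebra and r ∈ W⊗W such that a·r ∈ Im(1−τ) for all a ∈ W, where τ is the twist map on W⊗W. Then r ∈ Im(1−τ); i.e., r is antisymmetric modulo the symmetric part forced by the action: the preimage of Im(1−τ) under all adjoint actions is Im(1−τ) itself. -/

import Mathlib

open TensorProduct

set_option linter.unusedSectionVars false
open scoped Classical

noncomputable def ccoef {F : Type*} [Field F] {n : ℕ} (z e x : Fin n → F) (i k : Fin n) : F :=
  (∑ m, e m * x m) * (if k = i then 1 else 0) - z i * e k

section
variable {F : Type*} [Field F] [CharZero F] {n : ℕ} {A : AddSubgroup (Fin n → F)}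
variable {L : Type*} [LieRing L] [LieAlgebra F L]

lemma aux_texp (t : A → (Fin n → F) →ₗ[F] L) (ℬ : Module.Basis (A × Fin n) F L)
    (hℬ : ∀ (x : A) (i : Fin n), ℬ (x, i) = t x (Pi.single i 1))
    (w : A) (v : Fin n → F) : t w v = ∑ k, v k • ℬ (w, k) := by
  have hv : v = ∑ k, v k • (Pi.single k 1 : Fin n → F) := by
    ext j
    simp [Pi.single_apply]
  conv_lhs => rw [hv]
  rw [map_sum]
  refine Finset.sum_congr rfl fun k _ => ?_
  rw [map_smul, hℬ]

lemma aux_brB (t : A → (Fin n → F) →ₗ[F] L) (ℬ : Module.Basis (A × Fin n) F L)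
    (hℬ : ∀ (x : A) (i : Fin n), ℬ (x, i) = t x (Pi.single i 1))
    (hbr : ∀ (x y : A) (d d' : Fin n → F),
      ⁅t x d, t y d'⁆ = t (x + y)
        ((∑ i, d i * (y : Fin n → F) i) • d' - (∑ i, d' i * (x : Fin n → F) i) • d))
    (z : A) (e : Fin n → F) (x : A) (i : Fin n) :
    ⁅t z e, ℬ (x, i)⁆ = ∑ k, ccoef (z : Fin n → F) e (x : Fin n → F) i k • ℬ (z + x, k) := by
  rw [hℬ, hbr z x e (Pi.single i 1)]
  have h1 : (∑ m, (Pi.single i 1 : Fin n → F) m * (z : Fin n → F) m)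
      = (z : Fin n → F) i := by
    simp [Pi.single_apply]
  rw [h1, aux_texp t ℬ hℬ]
  refine Finset.sum_congr rfl fun k _ => ?_
  simp [ccoef, Pi.single_apply, sub_smul, mul_smul]

lemma aux_reprBr (t : A → (Fin n → F) →ₗ[F] L) (ℬ : Module.Basis (A × Fin n) F L)
    (hℬ : ∀ (x : A) (i : Fin n), ℬ (x, i) = t x (Pi.single i 1))
    (hbr : ∀ (x y : A) (d d' : Fin n → F),
      ⁅t x d, t y d'⁆ = t (x + y)
        ((∑ i, d i * (y : Fin n → F) i) • d' - (∑ i, d' i * (x : Fin n → F) i) • d))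
    (z : A) (e : Fin n → F) (x : A) (i : Fin n) (w : A) (k : Fin n) :
    ℬ.repr ⁅t z e, ℬ (x, i)⁆ (w, k) = if z + x = w then
      ccoef (z : Fin n → F) e (x : Fin n → F) i k else 0 := by
  classical
  rw [aux_brB t ℬ hℬ hbr]
  rw [map_sum]
  rw [Finsupp.finset_sum_apply]
  by_cases h : z + x = w
  · subst h
    rw [if_pos rfl]
    rw [Finset.sum_eq_single k]
    · simp
    · intro b _ hb
      simp [Finsupp.single_apply, Prod.ext_iff, hb]
    · simp
  · rw [if_neg h]
    apply Finset.sum_eq_zero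
    intro b _
    simp [Finsupp.single_apply, Prod.ext_iff, h]

lemma aux_master (t : A → (Fin n → F) →ₗ[F] L) (ℬ : Module.Basis (A × Fin n) F L)
    (hℬ : ∀ (x : A) (i : Fin n), ℬ (x, i) = t x (Pi.single i 1))
    (hbr : ∀ (x y : A) (d d' : Fin n → F),
      ⁅t x d, t y d'⁆ = t (x + y)
        ((∑ i, d i * (y : Fin n → F) i) • d' - (∑ i, d' i * (x : Fin n → F) i) • d))
    (z : A) (e : Fin n → F) (s : L ⊗[F] L) (hs : ⁅t z e, s⁆ = 0)
    (u v : A) (k l : Fin n) :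
    (∑ i, ccoef (z : Fin n → F) e ((u - z : A) : Fin n → F) i k
        * (Module.Basis.tensorProduct ℬ ℬ).repr s ((u - z, i), (v, l)))
    + (∑ j, ccoef (z : Fin n → F) e ((v - z : A) : Fin n → F) j l
        * (Module.Basis.tensorProduct ℬ ℬ).repr s ((u, k), (v - z, j))) = 0 := by
  classical
  set B := Module.Basis.tensorProduct ℬ ℬ with hB
  set f := B.repr s with hf
  -- coordinate of the bracket with a basis vector
  have key : ∀ p : (A × Fin n) × (A × Fin n),
      B.repr ⁅t z e, B p⁆ ((u, k), (v, l)) =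
        (if p.2 = (v, l) then 1 else 0) *
          (if z + p.1.1 = u then ccoef (z : Fin n → F) e (p.1.1 : Fin n → F) p.1.2 k else 0)
      + (if p.1 = (u, k) then 1 else 0) *
          (if z + p.2.1 = v then ccoef (z : Fin n → F) e (p.2.1 : Fin n → F) p.2.2 l else 0) := by
    rintro ⟨⟨x, i⟩, ⟨y, j⟩⟩
    rw [hB, Module.Basis.tensorProduct_apply', LieModule.lie_tmul_right, map_add]
    rw [Finsupp.add_apply]
    rw [Module.Basis.tensorProduct_repr_tmul_apply, Module.Basis.tensorProduct_repr_tmul_apply]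
    rw [aux_reprBr t ℬ hℬ hbr, aux_reprBr t ℬ hℬ hbr]
    simp [Finsupp.single_apply, smul_eq_mul, mul_comm]
  -- expand s over the support of f
  have hs' : s = ∑ p ∈ f.support, f p • B p := by
    conv_lhs => rw [← B.linearCombination_repr s]
    rw [Finsupp.linearCombination_apply]
    rfl
  have h0 : (0 : F) = ∑ p ∈ f.support, f p * B.repr ⁅t z e, B p⁆ ((u, k), (v, l)) := by
    have h1 : ⁅t z e, s⁆ = ∑ p ∈ f.support, f p • ⁅t z e, B p⁆ := by
      conv_lhs => rw [hs']
      have := map_sum (LieModule.toEnd F L (L ⊗[F] L) (t z e))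
        (fun p => f p • B p) f.support
      simp only [LieModule.toEnd_apply_apply] at this ⊢
      rw [this]
      exact Finset.sum_congr rfl fun p _ => lie_smul _ _ _
    have h2 := congrArg (fun m => B.repr m ((u, k), (v, l))) (h1.symm.trans hs)
    simp only [map_sum, map_smul, Finsupp.coe_finset_sum, Finset.sum_apply,
      Finsupp.smul_apply, smul_eq_mul, map_zero, Finsupp.coe_zero, Pi.zero_apply] at h2
    exact h2.symm
  simp_rw [key] at h0
  have hzu : z + (u - z) = u := by rw [add_comm]; exact sub_add_cancel u z
  have hzv : z + (v - z) = v := by rw [add_comm]; exact sub_add_cancel v z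
  have e1 : ∑ p ∈ f.support, f p * ((if p.2 = (v, l) then 1 else 0) *
        (if z + p.1.1 = u then ccoef (z : Fin n → F) e (p.1.1 : Fin n → F) p.1.2 k else 0))
      = ∑ i, ccoef (z : Fin n → F) e ((u - z : A) : Fin n → F) i k
          * f ((u - z, i), (v, l)) := by
    set T : Finset ((A × Fin n) × (A × Fin n)) :=
      Finset.univ.image (fun i : Fin n => ((u - z, i), (v, l))) with hT
    rw [Finset.sum_subset (Finset.subset_union_left (s₂ := T)) (fun p _ hp => by
      rw [Finsupp.notMem_support_iff.mp hp, zero_mul])]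
    rw [← Finset.sum_subset (Finset.subset_union_right (s₁ := f.support)) (fun p _ hp => ?_)]
    · rw [hT, Finset.sum_image (fun a _ b _ hab => by
        simpa using (Prod.ext_iff.mp (Prod.ext_iff.mp hab).1).2)]
      refine Finset.sum_congr rfl fun i _ => ?_
      simp [hzu, mul_comm]
    · by_cases h2 : p.2 = (v, l)
      · by_cases h1 : z + p.1.1 = u
        · exfalso
          apply hp
          rw [hT]
          simp only [Finset.mem_image, Finset.mem_univ, true_and]
          refine ⟨p.1.2, ?_⟩
          have : p.1.1 = u - z := by rw [← h1]; abel
          rw [← h2, ← this]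
        · simp [h1]
      · simp [h2]
  have e2 : ∑ p ∈ f.support, f p * ((if p.1 = (u, k) then 1 else 0) *
        (if z + p.2.1 = v then ccoef (z : Fin n → F) e (p.2.1 : Fin n → F) p.2.2 l else 0))
      = ∑ j, ccoef (z : Fin n → F) e ((v - z : A) : Fin n → F) j l
          * f ((u, k), (v - z, j)) := by
    set T : Finset ((A × Fin n) × (A × Fin n)) :=
      Finset.univ.image (fun j : Fin n => ((u, k), (v - z, j))) with hT
    rw [Finset.sum_subset (Finset.subset_union_left (s₂ := T)) (fun p _ hp => by
      rw [Finsupp.notMem_support_iff.mp hp, zero_mul])]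
    rw [← Finset.sum_subset (Finset.subset_union_right (s₁ := f.support)) (fun p _ hp => ?_)]
    · rw [hT, Finset.sum_image (fun a _ b _ hab => by
        simpa using (Prod.ext_iff.mp (Prod.ext_iff.mp hab).2).2)]
      refine Finset.sum_congr rfl fun j _ => ?_
      simp [hzv, mul_comm]
    · by_cases h2 : p.1 = (u, k)
      · by_cases h1 : z + p.2.1 = v
        · exfalso
          apply hp
          rw [hT]
          simp only [Finset.mem_image, Finset.mem_univ, true_and]
          refine ⟨p.2.2, ?_⟩
          have : p.2.1 = v - z := by rw [← h1]; abel
          rw [← h2, ← this]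
        · simp [h1]
      · simp [h2]
  rw [← e1, ← e2, ← Finset.sum_add_distrib]
  simp_rw [← mul_add]
  exact h0.symm


lemma aux_avoid {S : Set (Fin n → F)} (hS : S.Finite) (a0 : A)
    (ha0 : (a0 : Fin n → F) ≠ 0) : ∃ z : A, (z : Fin n → F) ∉ S := by
  by_contra h
  push_neg at h
  obtain ⟨j, hj⟩ : ∃ j, (a0 : Fin n → F) j ≠ 0 := by
    by_contra hc; push_neg at hc; exact ha0 (funext hc)
  have hcoe : ∀ m : ℕ, ((m • a0 : A) : Fin n → F) = m • (a0 : Fin n → F) := by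
    intro m
    induction m with
    | zero => simp
    | succ m ih => rw [succ_nsmul, succ_nsmul, ← ih]; rfl
  have hinj : Function.Injective (fun m : ℕ => (m • (a0 : Fin n → F))) := by
    intro m m' hmm'
    have := congrFun hmm' j
    simp only [Pi.smul_apply, nsmul_eq_mul] at this
    exact Nat.cast_injective (mul_right_cancel₀ hj this)
  refine hS.not_infinite (Set.infinite_of_injective_forall_mem hinj (fun m => ?_))
  rw [← hcoe m]
  exact h _

lemma aux_a0 (hA : Submodule.span F (A : Set (Fin n → F)) = ⊤) (k : Fin n) :
    ∃ a0 : A, (a0 : Fin n → F) ≠ 0 := by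
  by_contra h
  push_neg at h
  have hsub : (A : Set (Fin n → F)) ⊆ {0} := by
    intro w hw; exact h ⟨w, hw⟩
  have : (Submodule.span F (A : Set (Fin n → F))) ≤ ⊥ := by
    rw [← Submodule.span_zero_singleton F]
    exact Submodule.span_mono hsub
  rw [hA] at this
  have h1 : (Pi.single k 1 : Fin n → F) = 0 := by
    have := this (Submodule.mem_top (x := (Pi.single k 1 : Fin n → F)))
    simpa using this
  have := congrFun h1 k
  simp [Pi.single_eq_same] at this


lemma aux_inv_zero (hA : Submodule.span F (A : Set (Fin n → F)) = ⊤)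
    (t : A → (Fin n → F) →ₗ[F] L) (ℬ : Module.Basis (A × Fin n) F L)
    (hℬ : ∀ (x : A) (i : Fin n), ℬ (x, i) = t x (Pi.single i 1))
    (hbr : ∀ (x y : A) (d d' : Fin n → F),
      ⁅t x d, t y d'⁆ = t (x + y)
        ((∑ i, d i * (y : Fin n → F) i) • d' - (∑ i, d' i * (x : Fin n → F) i) • d))
    (s : L ⊗[F] L) (hs : ∀ a : L, ⁅a, s⁆ = 0) : s = 0 := by
  classical
  set B := Module.Basis.tensorProduct ℬ ℬ with hB
  set f := B.repr s with hf
  have hfz : ∀ q, f q = 0 := by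
    rintro ⟨⟨u, k⟩, ⟨v, l⟩⟩
    obtain ⟨a0, ha0⟩ := aux_a0 hA k
    set g : Fin n → F := fun i => f ((u, i), (v, l)) with hg
    set φ : (Fin n → F) →ₗ[F] F :=
      { toFun := fun w => ∑ i, w i * g i,
        map_add' := fun w w' => by
          simp [add_mul, Finset.sum_add_distrib],
        map_smul' := fun c w => by
          simp [Finset.mul_sum, mul_assoc] } with hφ
    have hφapp : ∀ w : Fin n → F, φ w = ∑ i, w i * g i := fun w => rfl
    set X1 : Finset A := f.support.image (fun p => p.1.1) with hX1
    have hX1v : ∀ p, p.1.1 ∉ X1 → f p = 0 := by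
      intro p hp
      by_contra hfp
      exact hp (Finset.mem_image.mpr ⟨p, Finsupp.mem_support_iff.mpr hfp, rfl⟩)
    set S0 : Set (Fin n → F) :=
      (fun w => w - (u : Fin n → F)) '' (Subtype.val '' (X1 : Set A)) with hS0def
    have hS0 : S0.Finite := (((X1 : Finset A).finite_toSet).image _).image _
    have hvalid : ∀ z : A, (z : Fin n → F) ∉ S0 → u + z ∉ X1 := by
      intro z hz hmem
      apply hz
      refine ⟨((u + z : A) : Fin n → F), ⟨(u + z : A), hmem, rfl⟩, ?_⟩
      push_cast
      abel
    -- the core relation coming from the master identity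
    have hrel : ∀ z : A, u + z ∉ X1 →
        (u : Fin n → F) k * g k - φ (z : Fin n → F) = 0 := by
      intro z hz
      have hm := aux_master t ℬ hℬ hbr z (Pi.single k 1) s (hs _) (u + z) v k l
      have h2' : (∑ j, ccoef (z : Fin n → F) (Pi.single k 1)
          (((v - z : A)) : Fin n → F) j l * (Module.Basis.tensorProduct ℬ ℬ).repr s ((u + z, k), (v - z, j))) = 0 :=
        Finset.sum_eq_zero fun jj _ => by
          rw [show (Module.Basis.tensorProduct ℬ ℬ).repr s ((u + z, k), (v - z, jj)) = f ((u + z, k), (v - z, jj)) from rfl,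
            hX1v _ hz, mul_zero]
      rw [h2', add_zero] at hm
      have hus : u + z - z = u := by abel
      rw [hus] at hm
      have hcc : ∀ i, ccoef (z : Fin n → F) (Pi.single k 1) (u : Fin n → F) i k
          = (u : Fin n → F) k * (if k = i then 1 else 0) - (z : Fin n → F) i := by
        intro i
        simp [ccoef, Pi.single_apply, mul_comm]
      have hsum : (∑ i, ccoef (z : Fin n → F) (Pi.single k 1) (u : Fin n → F) i k
            * (Module.Basis.tensorProduct ℬ ℬ).repr s ((u, i), (v, l)))
          = (u : Fin n → F) k * g k - φ (z : Fin n → F) := by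
        simp_rw [hcc, sub_mul]
        rw [Finset.sum_sub_distrib]
        congr 1
        · rw [Finset.sum_eq_single k (fun b _ hb => by simp [Ne.symm hb]) (by simp)]
          simp [hg]
          exact Or.inl rfl
      rw [hsum] at hm
      exact hm
    -- φ vanishes on A
    have hφA : ∀ b : A, φ (b : Fin n → F) = 0 := by
      intro b
      set S1 : Set (Fin n → F) := S0 ∪ ((fun w => w - (b : Fin n → F)) '' S0) with hS1def
      obtain ⟨z, hzS⟩ := aux_avoid (hS0.union (hS0.image (fun w => w - (b : Fin n → F)))) a0 ha0
      have hz1 : u + z ∉ X1 := hvalid z (fun hmem => hzS (Or.inl hmem))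
      have hz2 : u + (z + b) ∉ X1 := by
        apply hvalid
        intro hmem
        apply hzS
        right
        refine ⟨((z + b : A) : Fin n → F), hmem, ?_⟩
        push_cast
        abel
      have e1 := hrel z hz1
      have e2 := hrel (z + b) hz2
      have hadd : ((z + b : A) : Fin n → F) = (z : Fin n → F) + (b : Fin n → F) := rfl
      rw [hadd, map_add] at e2
      linear_combination e1 - e2
    -- φ is identically zero
    have hφ0 : ∀ w, φ w = 0 := by
      have hker : Submodule.span F (A : Set (Fin n → F)) ≤ LinearMap.ker φ := by
        rw [Submodule.span_le]
        rintro w hw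
        exact LinearMap.mem_ker.mpr (hφA ⟨w, hw⟩)
      rw [hA] at hker
      intro w
      exact LinearMap.mem_ker.mp (hker Submodule.mem_top)
    have : φ (Pi.single k 1) = g k := by
      rw [hφapp]
      rw [Finset.sum_eq_single k]
      · simp
      · intro b _ hb
        simp [Pi.single_apply, hb]
      · simp
    rw [hφ0] at this
    exact this.symm
  have hf0 : f = 0 := by
    ext q
    exact hfz q
  have := hf
  rw [hf0] at this
  exact (LinearEquiv.map_eq_zero_iff B.repr).mp this.symm


end

/-- For the generalized Witt algebra `W`, if `r ∈ W ⊗ W` satisfies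
`a · r ∈ Im(1-τ)` for every `a ∈ W` (adjoint diagonal action, `τ` the twist map),
then `r ∈ Im(1-τ)`. -/
theorem witt_bialg_stmt15 {F : Type*} [Field F] [CharZero F] {n : ℕ}
    {A : AddSubgroup (Fin n → F)}
    (hA : Submodule.span F (A : Set (Fin n → F)) = ⊤)
    {L : Type*} [LieRing L] [LieAlgebra F L]
    (t : A → (Fin n → F) →ₗ[F] L)
    (ℬ : Module.Basis (A × Fin n) F L)
    (hℬ : ∀ (x : A) (i : Fin n), ℬ (x, i) = t x (Pi.single i 1))
    (hbr : ∀ (x y : A) (d d' : Fin n → F),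
      ⁅t x d, t y d'⁆ = t (x + y)
        ((∑ i, d i * (y : Fin n → F) i) • d' - (∑ i, d' i * (x : Fin n → F) i) • d))
    (r : L ⊗[F] L)
    (hr : ∀ a : L, ⁅a, r⁆ ∈ LinearMap.range
      (LinearMap.id - (TensorProduct.comm F L L).toLinearMap)) :
    r ∈ LinearMap.range (LinearMap.id - (TensorProduct.comm F L L).toLinearMap) := by
  classical
  set σ : L ⊗[F] L →ₗ[F] L ⊗[F] L := (TensorProduct.comm F L L).toLinearMap with hσdef
  have hσσ : ∀ m : L ⊗[F] L, σ (σ m) = m := by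
    intro m
    induction m using TensorProduct.induction_on with
    | zero => simp
    | tmul a b => simp [hσdef]
    | add x y hx hy => rw [map_add, map_add, hx, hy]
  have hσlie : ∀ (a : L) (m : L ⊗[F] L), ⁅a, σ m⁆ = σ ⁅a, m⁆ := by
    intro a m
    induction m using TensorProduct.induction_on with
    | zero => simp
    | tmul x y =>
      simp only [hσdef, LinearEquiv.coe_coe, TensorProduct.comm_tmul,
        LieModule.lie_tmul_right, map_add]
      abel
    | add x y hx hy =>
      rw [map_add, lie_add, hx, hy, lie_add, map_add]
  have hinv : ∀ a : L, ⁅a, r + σ r⁆ = 0 := by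
    intro a
    obtain ⟨w, hw⟩ := hr a
    have hw' : w - σ w = ⁅a, r⁆ := by
      simpa [LinearMap.sub_apply] using hw
    rw [lie_add, hσlie a r, ← hw']
    rw [map_sub, hσσ]
    abel
  have hzero : r + σ r = 0 := aux_inv_zero hA t ℬ hℬ hbr (r + σ r) hinv
  have hneg : σ r = -r := by
    have := hzero
    linear_combination (norm := abel) this
  refine ⟨(2 : F)⁻¹ • r, ?_⟩
  simp only [LinearMap.sub_apply, LinearMap.id_apply, map_smul, hneg, smul_neg, sub_neg_eq_add]
  rw [← two_smul F r, smul_smul, inv_mul_cancel₀ (two_ne_zero), one_smul]
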